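/- Let X ⊆ ℕ with 0 ∈ X, gcd of all elements of X equal to 1, and upper density d̄(X) > 1/2. Then d̄(X + X) ≥ (1 + d̄(X))/2. -/

import Mathlib

open scoped Classical
open scoped Pointwise

/-- Upper density of a set of natural numbers. -/
noncomputable def upperDensity (A : Set ℕ) : ℝ :=
  Filter.atTop.limsup fun n => (((Finset.Icc 1 n).filter fun m => m ∈ A).card : ℝ) / n

lemma pigeon (A : Finset ℕ) (l m : ℕ) (hsub : ∀ a ∈ A, a ≤ l)
    (hcard : l + 3 ≤ 2 * A.card) (hm : m < l) : m ∈ A + A ∨ m + l ∈ A + A := by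
  by_contra hc
  push_neg at hc
  obtain ⟨h1, h2⟩ := hc
  set A₁ := A.filter (fun a => a ≤ m) with hA₁
  set A₂ := A.filter (fun a => m ≤ a) with hA₂
  have hA : A.card ≤ A₁.card + A₂.card := by
    calc A.card ≤ (A₁ ∪ A₂).card := by
          apply Finset.card_le_card
          intro a ha
          rcases le_total a m with h | h
          · exact Finset.mem_union_left _ (Finset.mem_filter.2 ⟨ha, h⟩)
          · exact Finset.mem_union_right _ (Finset.mem_filter.2 ⟨ha, h⟩)
      _ ≤ A₁.card + A₂.card := Finset.card_union_le _ _
  -- bound on A₁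
  have hb1 : 2 * A₁.card ≤ m + 1 := by
    set A₁' := A₁.image (fun a => m - a) with hA₁'
    have hinj : A₁'.card = A₁.card := by
      apply Finset.card_image_of_injOn
      intro a ha b hb hab
      have ha' : a ≤ m := (Finset.mem_filter.1 ha).2
      have hb' : b ≤ m := (Finset.mem_filter.1 hb).2
      have hab' : m - a = m - b := hab
      omega
    have hdisj : Disjoint A₁ A₁' := by
      rw [Finset.disjoint_left]
      intro x hx hx'
      obtain ⟨a, ha, hax⟩ := Finset.mem_image.1 hx'
      have ha' : a ≤ m := (Finset.mem_filter.1 ha).2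
      have hxm : x + a = m := by omega
      exact h1 (Finset.mem_add.2 ⟨x, (Finset.mem_filter.1 hx).1, a,
        (Finset.mem_filter.1 ha).1, hxm⟩)
    have hsub' : A₁ ∪ A₁' ⊆ Finset.range (m + 1) := by
      intro x hx
      rcases Finset.mem_union.1 hx with h | h
      · exact Finset.mem_range.2 (by have := (Finset.mem_filter.1 h).2; omega)
      · obtain ⟨a, _, hax⟩ := Finset.mem_image.1 h
        exact Finset.mem_range.2 (by omega)
    have := Finset.card_le_card hsub'
    rw [Finset.card_union_of_disjoint hdisj, Finset.card_range] at this
    omega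
  -- bound on A₂
  have hb2 : 2 * A₂.card + m ≤ l + 1 := by
    set A₂' := A₂.image (fun a => m + l - a) with hA₂'
    have hle : ∀ a ∈ A₂, m ≤ a ∧ a ≤ l := fun a ha =>
      ⟨(Finset.mem_filter.1 ha).2, hsub a (Finset.mem_filter.1 ha).1⟩
    have hinj : A₂'.card = A₂.card := by
      apply Finset.card_image_of_injOn
      intro a ha b hb hab
      have h1 := hle a ha; have h2 := hle b hb
      have hab' : m + l - a = m + l - b := hab
      omega
    have hdisj : Disjoint A₂ A₂' := by
      rw [Finset.disjoint_left]
      intro x hx hx'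
      obtain ⟨a, ha, hax⟩ := Finset.mem_image.1 hx'
      have h1 := hle a ha
      have hxm : x + a = m + l := by omega
      exact h2 (Finset.mem_add.2 ⟨x, (Finset.mem_filter.1 hx).1, a,
        (Finset.mem_filter.1 ha).1, hxm⟩)
    have hsub' : A₂ ∪ A₂' ⊆ Finset.Icc m l := by
      intro x hx
      rcases Finset.mem_union.1 hx with h | h
      · exact Finset.mem_Icc.2 (hle x h)
      · obtain ⟨a, ha, hax⟩ := Finset.mem_image.1 h
        have := hle a ha
        exact Finset.mem_Icc.2 (by omega)
    have := Finset.card_le_card hsub'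
    rw [Finset.card_union_of_disjoint hdisj, Nat.card_Icc] at this
    omega
  omega

lemma key (A : Finset ℕ) (l : ℕ) (h0 : 0 ∈ A) (hl : l ∈ A)
    (hsub : ∀ a ∈ A, a ≤ l) (hcard : l + 3 ≤ 2 * A.card) :
    l + A.card ≤ (A + A).card := by
  set B := A + A with hB
  have hmemB : ∀ a ∈ A, ∀ b ∈ A, a + b ∈ B := fun a ha b hb =>
    Finset.mem_add.2 ⟨a, ha, b, hb, rfl⟩
  set B₁ := (Finset.range l).filter (fun x => x ∈ B) with hB₁
  set B₂ := (Finset.range l).filter (fun x => x + l ∈ B) with hB₂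
  have hunion : B₁ ∪ B₂ = Finset.range l := by
    apply Finset.Subset.antisymm
    · intro x hx
      rcases Finset.mem_union.1 hx with h | h
      · exact (Finset.mem_filter.1 h).1
      · exact (Finset.mem_filter.1 h).1
    · intro x hx
      rcases pigeon A l x hsub hcard (Finset.mem_range.1 hx) with h | h
      · exact Finset.mem_union_left _ (Finset.mem_filter.2 ⟨hx, h⟩)
      · exact Finset.mem_union_right _ (Finset.mem_filter.2 ⟨hx, h⟩)
  have hinter : A.erase l ⊆ B₁ ∩ B₂ := by
    intro a ha
    have haA := Finset.mem_of_mem_erase ha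
    have hal : a < l := lt_of_le_of_ne (hsub a haA) (Finset.ne_of_mem_erase ha)
    refine Finset.mem_inter.2 ⟨Finset.mem_filter.2 ⟨Finset.mem_range.2 hal, ?_⟩,
      Finset.mem_filter.2 ⟨Finset.mem_range.2 hal, ?_⟩⟩
    · simpa using hmemB a haA 0 h0
    · exact hmemB a haA l hl
  have hcards : l + (A.card - 1) ≤ B₁.card + B₂.card := by
    have h1 := Finset.card_union_add_card_inter B₁ B₂
    have h2 : (A.erase l).card ≤ (B₁ ∩ B₂).card := Finset.card_le_card hinter
    rw [Finset.card_erase_of_mem hl] at h2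
    rw [hunion, Finset.card_range] at h1
    omega
  -- now count B
  set D := B₂.image (fun x => x + l) with hD
  have hDcard : D.card = B₂.card := Finset.card_image_of_injective _ (add_left_injective l)
  have hsubB : B₁ ∪ insert (2 * l) D ⊆ B := by
    intro x hx
    rcases Finset.mem_union.1 hx with h | h
    · exact (Finset.mem_filter.1 h).2
    · rcases Finset.mem_insert.1 h with h | h
      · subst h
        have := hmemB l hl l hl
        simpa [two_mul] using this
      · obtain ⟨a, ha, rfl⟩ := Finset.mem_image.1 h
        exact (Finset.mem_filter.1 ha).2
  have hdisj1 : Disjoint B₁ (insert (2 * l) D) := by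
    rw [Finset.disjoint_left]
    intro x hx hx'
    have hxl : x < l := Finset.mem_range.1 (Finset.mem_filter.1 hx).1
    rcases Finset.mem_insert.1 hx' with h | h
    · omega
    · obtain ⟨a, ha, rfl⟩ := Finset.mem_image.1 h
      omega
  have h2lD : 2 * l ∉ D := by
    intro h
    obtain ⟨a, ha, hax⟩ := Finset.mem_image.1 h
    have := Finset.mem_range.1 (Finset.mem_filter.1 ha).1
    omega
  have hfin : B₁.card + (B₂.card + 1) ≤ B.card := by
    have := Finset.card_le_card hsubB
    rw [Finset.card_union_of_disjoint hdisj1, Finset.card_insert_of_notMem h2lD, hDcard] at this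
    omega
  have hA2 : 2 ≤ A.card := by omega
  omega

theorem sumset_density_large (X : Set ℕ) (h0 : 0 ∈ X)
    (hgcd : ∀ d : ℕ, (∀ x ∈ X, d ∣ x) → d = 1)
    (hgt : 1 / 2 < upperDensity X) :
    (1 + upperDensity X) / 2 ≤ upperDensity {n : ℕ | ∃ x ∈ X, ∃ y ∈ X, n = x + y} := by
  set S := {n : ℕ | ∃ x ∈ X, ∃ y ∈ X, n = x + y} with hS
  set f : ℕ → ℝ := fun n => (((Finset.Icc 1 n).filter fun m => m ∈ X).card : ℝ) / n with hf
  set g : ℕ → ℝ := fun n => (((Finset.Icc 1 n).filter fun m => m ∈ S).card : ℝ) / n with hg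
  set α := upperDensity X with hα
  have hf0 : ∀ n, 0 ≤ f n := fun n => by positivity
  have hgbd : Filter.IsBoundedUnder (· ≤ ·) Filter.atTop g := by
    apply Filter.isBoundedUnder_of
    refine ⟨1, fun n => ?_⟩
    rcases Nat.eq_zero_or_pos n with rfl | hn
    · show ((Finset.filter _ _).card : ℝ) / ((0:ℕ):ℝ) ≤ 1
      rw [Nat.cast_zero, div_zero]; norm_num
    · show ((Finset.filter _ _).card : ℝ) / (n:ℝ) ≤ 1
      rw [div_le_one (by exact_mod_cast hn)]
      have : ((Finset.Icc 1 n).filter fun m => m ∈ S).card ≤ n := by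
        refine (Finset.card_filter_le _ _).trans ?_
        rw [Nat.card_Icc]; omega
      exact_mod_cast this
  -- main step: for suitable ε
  have main : ∀ ε : ℝ, 0 < ε → ε ≤ α - 1/2 → (1 + α - ε) / 2 ≤ upperDensity S := by
    intro ε hε hεα
    have hfreq : ∃ᶠ n in Filter.atTop, α - ε < f n := by
      have hlim : Filter.atTop.limsup f = α := rfl
      apply Filter.frequently_lt_of_lt_limsup
      · exact Filter.IsCoboundedUnder.of_frequently_ge
          (Filter.Frequently.of_forall (fun n => hf0 n))
      · rw [hlim]; linarith
    have hlimS : upperDensity S = Filter.atTop.limsup g := rfl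
    rw [hlimS]
    apply Filter.le_limsup_of_frequently_le _ hgbd
    rw [Filter.frequently_atTop] at hfreq ⊢
    intro M
    obtain ⟨n, hnM, hfn⟩ := hfreq M
    have hfn' : α - ε < (((Finset.Icc 1 n).filter fun m => m ∈ X).card : ℝ) / n := hfn
    set F := (Finset.Icc 1 n).filter (fun m => m ∈ X) with hF
    have hfhalf : 1/2 < (F.card : ℝ) / n := by
      calc (1:ℝ)/2 ≤ α - ε := by linarith
        _ < _ := hfn'
    have hn0 : 0 < n := by
      rcases Nat.eq_zero_or_pos n with rfl | h
      · rw [Nat.cast_zero, div_zero] at hfhalf; linarith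
      · exact h
    have hn0R : (0:ℝ) < n := by exact_mod_cast hn0
    have hC0 : 0 < F.card := by
      by_contra h
      push_neg at h
      have h0' : F.card = 0 := by omega
      rw [h0', Nat.cast_zero, zero_div] at hfhalf
      linarith
    have hne : F.Nonempty := Finset.card_pos.1 hC0
    set n' := F.max' hne with hn'
    have hn'F : n' ∈ F := F.max'_mem hne
    have hn'X : n' ∈ X := (Finset.mem_filter.1 hn'F).2
    have hn'Icc := Finset.mem_Icc.1 (Finset.mem_filter.1 hn'F).1
    have hn'1 : 1 ≤ n' := hn'Icc.1
    have hn'n : n' ≤ n := hn'Icc.2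
    have hFsub : ∀ a ∈ F, 1 ≤ a ∧ a ≤ n' := fun a ha =>
      ⟨(Finset.mem_Icc.1 (Finset.mem_filter.1 ha).1).1, F.le_max' a ha⟩
    have hCn' : F.card ≤ n' := by
      have hsub : F ⊆ Finset.Icc 1 n' := fun a ha => Finset.mem_Icc.2 (hFsub a ha)
      have := Finset.card_le_card hsub
      rwa [Nat.card_Icc, Nat.add_sub_cancel] at this
    have h2C : n + 1 ≤ 2 * F.card := by
      rw [div_lt_div_iff₀ (by norm_num) hn0R] at hfhalf
      have h1 : (n:ℝ) < ((2 * F.card : ℕ) : ℝ) := by push_cast; linarith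
      have := Nat.cast_lt.1 h1
      omega
    -- apply key lemma
    set A := insert 0 F with hA
    have h0F : 0 ∉ F := by
      intro h
      have := (hFsub 0 h).1; omega
    have hAcard : A.card = F.card + 1 := Finset.card_insert_of_notMem h0F
    have hkey : n' + A.card ≤ (A + A).card := by
      apply key A n' (Finset.mem_insert_self 0 F) (Finset.mem_insert_of_mem hn'F)
      · intro a ha
        rcases Finset.mem_insert.1 ha with rfl | ha
        · omega
        · exact (hFsub a ha).2
      · omega
    have hAX : ∀ a ∈ A, a ∈ X := by
      intro a ha
      rcases Finset.mem_insert.1 ha with rfl | ha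
      · exact h0
      · exact (Finset.mem_filter.1 ha).2
    have hsubS : (A + A).erase 0 ⊆ (Finset.Icc 1 (2 * n')).filter (fun m => m ∈ S) := by
      intro x hx
      have hx0 : x ≠ 0 := Finset.ne_of_mem_erase hx
      obtain ⟨a, ha, b, hb, hab⟩ := Finset.mem_add.1 (Finset.mem_of_mem_erase hx)
      have hal : a ≤ n' := by
        rcases Finset.mem_insert.1 ha with rfl | h
        · omega
        · exact (hFsub a h).2
      have hbl : b ≤ n' := by
        rcases Finset.mem_insert.1 hb with rfl | h
        · omega
        · exact (hFsub b h).2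
      refine Finset.mem_filter.2 ⟨Finset.mem_Icc.2 ⟨by omega, by omega⟩, ?_⟩
      exact ⟨a, hAX a ha, b, hAX b hb, hab.symm⟩
    have hScard : n' + F.card ≤ ((Finset.Icc 1 (2 * n')).filter (fun m => m ∈ S)).card := by
      have h1 := Finset.card_le_card hsubS
      have h0AA : (0:ℕ) ∈ A + A := Finset.mem_add.2
        ⟨0, Finset.mem_insert_self 0 F, 0, Finset.mem_insert_self 0 F, rfl⟩
      have h2 : ((A + A).erase 0).card = (A + A).card - 1 :=
        Finset.card_erase_of_mem h0AA
      omega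
    refine ⟨2 * n', by omega, ?_⟩
    -- final arithmetic
    have hn'0R : (0:ℝ) < n' := by exact_mod_cast hn'1
    have hg2 : ((n':ℝ) + F.card) / (2 * (n':ℝ)) ≤ g (2 * n') := by
      have hEq : g (2 * n') =
          ((((Finset.Icc 1 (2 * n')).filter fun m => m ∈ S).card : ℝ) / ((2 * n' : ℕ) : ℝ)) := rfl
      rw [hEq]
      have h1 : ((n':ℝ) + F.card) ≤
          (((Finset.Icc 1 (2 * n')).filter fun m => m ∈ S).card : ℝ) := by exact_mod_cast hScard
      have h2 : ((2 * n' : ℕ) : ℝ) = 2 * (n':ℝ) := by push_cast; ring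
      rw [h2]
      gcongr
    have hfrac : α - ε ≤ (F.card : ℝ) / n' := by
      refine le_trans (le_of_lt hfn') ?_
      exact div_le_div_of_nonneg_left (by positivity) hn'0R (by exact_mod_cast hn'n)
    have hne' : (n':ℝ) ≠ 0 := ne_of_gt hn'0R
    have hsplit : ((n':ℝ) + F.card) / (2 * (n':ℝ)) = 1/2 + ((F.card:ℝ) / n') / 2 := by
      have key : ∀ a b : ℝ, a ≠ 0 → (a + b) / (2 * a) = 1/2 + (b / a) / 2 := by
        intro a b ha; field_simp
      exact key _ _ hne'
    calc (1 + α - ε) / 2 ≤ 1/2 + ((F.card:ℝ) / n') / 2 := by linarith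
      _ = ((n':ℝ) + F.card) / (2 * (n':ℝ)) := hsplit.symm
      _ ≤ g (2 * n') := hg2
  -- conclude
  apply le_of_forall_pos_le_add
  intro ε hε
  have hεα : 0 < α - 1/2 := by linarith
  set ε₀ := min ε (α - 1/2) with hε₀
  have hε₀pos : 0 < ε₀ := lt_min hε hεα
  have hmain := main ε₀ hε₀pos (min_le_right _ _)
  have : ε₀ ≤ ε := min_le_left _ _
  linarith
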